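/- In the large complex structure setting with $m^0 = 0$ and $\tilde{n}_0 \neq 0$, the real F-term equations $\frac{2 (m^b z_b) z^a}{C'^2} + 3\tilde{n}_0 \frac{z^a}{C'\kappa'} = m^a$ imply $z^a = -\frac{\kappa'}{6 \tilde{n}_0} C_2 m^a$ where $C_2 = \frac{4(\kappa + 3k)}{4\kappa + 3k}$, and consequently $\kappa = -\frac{\kappa(m)}{(6\tilde{n}_0)^3} \kappa'^3 C_2^3$ where $\kappa(m) = d_{abc} m^a m^b m^c$, as well as $m^b z_b = -\frac{9 \tilde{n}_0}{2 \kappa'} C_1$ with $C_1 = \frac{2\kappa(2\kappa - 3k)}{(4\kappa + 3k)(\kappa + 3k)}$. -/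

import Mathlib

/-- In the large complex structure setting with `m⁰ = 0` and
`ñ₀ ≠ 0`, the real F-term equations `2(m^b z_b) z^a/C'² + 3 ñ₀ z^a/(C'κ') = m^a`
imply `z^a = -(κ'/(6ñ₀)) C₂ m^a` with `C₂ = 4(κ+3k)/(4κ+3k)`, hence
`κ = -(κ(m)/(6ñ₀)³) κ'³ C₂³` with `κ(m) = d_{abc} m^a m^b m^c`, and
`m^b z_b = -(9ñ₀/(2κ')) C₁` with `C₁ = 2κ(2κ-3k)/((4κ+3k)(κ+3k))`. -/
theorem lcs_m0_zero_saxion_solution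
    (h : ℕ) (d : Fin h → Fin h → Fin h → ℝ)
    (hd : ∀ a b c, d a b c = d b a c ∧ d a b c = d a c b)
    (k : ℝ) (m : Fin h → ℝ) (z : Fin h → ℝ)
    (κ : ℝ) (hκ : κ = ∑ a, ∑ b, ∑ e, d a b e * z a * z b * z e)
    (κa : Fin h → ℝ) (hκa : κa = fun a => ∑ b, ∑ e, d a b e * z b * z e)
    (κm : ℝ) (hκm : κm = ∑ a, ∑ b, ∑ e, d a b e * m a * m b * m e)
    (κ' : ℝ) (hκ' : κ' = κ + 3 * k / 4) (hκ'pos : 0 < κ')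
    (C' : ℝ) (hC' : C' = 1 - 9 * k / (4 * κ')) (hC'ne : C' ≠ 0)
    (hκ3k : κ + 3 * k ≠ 0) (h4κ3k : 4 * κ + 3 * k ≠ 0)
    (C1 : ℝ) (hC1 : C1 = 2 * κ * (2 * κ - 3 * k) / ((4 * κ + 3 * k) * (κ + 3 * k)))
    (C2 : ℝ) (hC2 : C2 = 4 * (κ + 3 * k) / (4 * κ + 3 * k))
    (za : Fin h → ℝ) (hza : za = fun a => (3 * κa a / (4 * κ')) * C')
    (ntilde0 : ℝ) (hntilde0 : ntilde0 ≠ 0)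
    (hRe : ∀ a, 2 * (∑ b, m b * za b) * z a / C' ^ 2
      + 3 * ntilde0 * z a / (C' * κ') = m a) :
    (∀ a, z a = -(κ' / (6 * ntilde0)) * C2 * m a)
    ∧ κ = -(κm / (6 * ntilde0) ^ 3) * κ' ^ 3 * C2 ^ 3
    ∧ ∑ b, m b * za b = -(9 * ntilde0 / (2 * κ')) * C1 := by
  have hκ'ne : κ' ≠ 0 := ne_of_gt hκ'pos
  set S : ℝ := ∑ b, m b * za b with hSdef
  -- closed forms for κ' and C'
  have hκ'eq : κ' = (4 * κ + 3 * k) / 4 := by rw [hκ']; ring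
  have hCk : C' * (4 * κ + 3 * k) = 2 * (2 * κ - 3 * k) := by
    have h1 : C' * κ' = κ' - 9 * k / 4 := by
      rw [hC']; field_simp
    linear_combination 4 * h1 + (4 - 4 * C') * hκ'
  have hC'eq : C' = 2 * (2 * κ - 3 * k) / (4 * κ + 3 * k) :=
    (eq_div_iff h4κ3k).mpr hCk
  have h2k3 : 2 * κ - 3 * k ≠ 0 := by
    intro h0
    apply hC'ne
    rw [hC'eq, h0]
    simp
  -- ∑ z b * κa b = κ
  have hzκa : (∑ b, z b * κa b) = κ := by
    rw [hκ]
    refine Finset.sum_congr rfl fun a _ => ?_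
    simp only [hκa]
    rw [Finset.mul_sum]
    refine Finset.sum_congr rfl fun b _ => ?_
    rw [Finset.mul_sum]
    refine Finset.sum_congr rfl fun e _ => ?_
    ring
  -- ∑ z b * za b = (3C'/(4κ')) κ
  have hzza : (∑ b, z b * za b) = (3 * C' / (4 * κ')) * κ := by
    calc (∑ b, z b * za b) = (3 * C' / (4 * κ')) * ∑ b, z b * κa b := by
          rw [Finset.mul_sum]
          refine Finset.sum_congr rfl fun b _ => ?_
          simp only [hza]
          ring
      _ = _ := by rw [hzκa]
  -- scalar equation for S
  have hSeq : S = (2 * S / C' ^ 2 + 3 * ntilde0 / (C' * κ')) * ((3 * C' / (4 * κ')) * κ) := by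
    calc S = ∑ b, m b * za b := hSdef
      _ = ∑ b, (2 * S * z b / C' ^ 2 + 3 * ntilde0 * z b / (C' * κ')) * za b := by
          refine Finset.sum_congr rfl fun b _ => ?_
          rw [hRe b]
      _ = (2 * S / C' ^ 2 + 3 * ntilde0 / (C' * κ')) * ∑ b, z b * za b := by
          conv_rhs => rw [Finset.mul_sum]
          apply Finset.sum_congr rfl
          intro b _
          ring
      _ = _ := by rw [hzza]
  -- solve for S
  have hSval : S = -(9 * ntilde0 / (2 * κ')) * C1 := by
    rw [hC1, hκ'eq]
    rw [hC'eq, hκ'eq] at hSeq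
    field_simp at hSeq ⊢
    have h2 : (2 * κ - 3 * k) ^ 2 *
        (S * (4 * κ + 3 * k) ^ 2 * (κ + 3 * k) + 36 * ntilde0 * κ * (2 * κ - 3 * k)) = 0 := by
      rw [eq_div_iff (pow_ne_zero 2 (by contrapose! h4κ3k; linarith))] at hSeq
      linear_combination (-(2 * κ - 3 * k) ^ 2) * hSeq
    have hT : S * (4 * κ + 3 * k) ^ 2 * (κ + 3 * k) + 36 * ntilde0 * κ * (2 * κ - 3 * k) = 0 :=
      (mul_eq_zero.mp h2).resolve_left (pow_ne_zero 2 h2k3)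
    have hS : S = -36 * ntilde0 * κ * (2 * κ - 3 * k) / ((4 * κ + 3 * k) ^ 2 * (κ + 3 * k)) := by
      rw [eq_div_iff (mul_ne_zero (pow_ne_zero 2 h4κ3k) hκ3k)]
      linear_combination hT
    rw [hS]
    field_simp
    ring
  -- the coefficient in the F-term equation
  have hAval : 2 * S / C' ^ 2 + 3 * ntilde0 / (C' * κ') = -6 * ntilde0 / (κ + 3 * k) := by
    rw [hSval, hC1, hC'eq, hκ'eq]
    field_simp
    ring
  -- part 1
  have hzm : ∀ a, z a = -(κ' / (6 * ntilde0)) * C2 * m a := by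
    intro a
    have hre : (2 * S / C' ^ 2 + 3 * ntilde0 / (C' * κ')) * z a = m a := by
      rw [← hRe a]
      field_simp
    rw [hAval] at hre
    field_simp at hre
    have hκC2 : κ' * C2 = κ + 3 * k := by
      rw [hκ'eq, hC2]; field_simp
    have h6 : (6 : ℝ) * ntilde0 ≠ 0 := by positivity
    have hrw : -(κ' / (6 * ntilde0)) * C2 * m a = -((κ + 3 * k) * m a) / (6 * ntilde0) := by
      rw [← hκC2]; ring
    rw [hrw, eq_div_iff h6]
    linear_combination -hre
  refine ⟨hzm, ?_, hSval⟩
  -- part 2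
  have key : κ = (-(κ' / (6 * ntilde0)) * C2) ^ 3 * κm := by
    rw [hκ, hκm, Finset.mul_sum]
    refine Finset.sum_congr rfl fun a _ => ?_
    rw [Finset.mul_sum]
    refine Finset.sum_congr rfl fun b _ => ?_
    rw [Finset.mul_sum]
    refine Finset.sum_congr rfl fun e _ => ?_
    rw [hzm a, hzm b, hzm e]
    ring
  rw [key]
  field_simp
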